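/- For every integer n ≥ 3 and all real x, y, the partial derivative in x of the continuous-analogue Pochhammer symbol satisfies x · (∂r̃/∂x)(x,y,n) = n · r̃(x,y,n) − ((n-1)² y / 2) · r̃(x, ((n-1)²/(n-2)²)·y, n-1), where for fixed y and n the function x ↦ r̃(x,y,n) is a polynomial in x and ∂r̃/∂x denotes its derivative. -/

import Mathlib

/-- The continuous-analogue Pochhammer symbol
`r̃(x,y,n) = Σ_{k=1}^{n} ((n-1)^{2(n-k)} / (2^{n-k} (n-k)!)) x^k y^{n-k}`,
with `r̃(x,y,0) = 1`. -/
noncomputable def rtilde (x y : ℝ) (n : ℕ) : ℝ :=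
  if n = 0 then 1 else
    ∑ k ∈ Finset.Icc 1 n,
      ((n : ℝ) - 1) ^ (2 * (n - k)) / (2 ^ (n - k) * (Nat.factorial (n - k) : ℝ))
        * x ^ k * y ^ (n - k)

/-- For `n ≥ 3`,
`x · (∂r̃/∂x)(x,y,n) = n r̃(x,y,n) − ((n-1)² y / 2) r̃(x, ((n-1)²/(n-2)²) y, n-1)`. -/
theorem rtilde_deriv_x (n : ℕ) (hn : 3 ≤ n) (x y : ℝ) :
    x * deriv (fun u : ℝ => rtilde u y n) x =
      (n : ℝ) * rtilde x y n -
        ((n : ℝ) - 1) ^ 2 * y / 2 *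
          rtilde x (((n : ℝ) - 1) ^ 2 / ((n : ℝ) - 2) ^ 2 * y) (n - 1) := by
  have h0 : n ≠ 0 := by omega
  have h1 : n - 1 ≠ 0 := by omega
  set a : ℕ → ℝ := fun k =>
    ((n : ℝ) - 1) ^ (2 * (n - k)) / (2 ^ (n - k) * (Nat.factorial (n - k) : ℝ)) with ha
  have hfun : (fun u : ℝ => rtilde u y n)
      = fun u => ∑ k ∈ Finset.Icc 1 n, a k * u ^ k * y ^ (n - k) := by
    funext u; simp [rtilde, h0, ha]
  have hd : HasDerivAt (fun u : ℝ => rtilde u y n)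
      (∑ k ∈ Finset.Icc 1 n, a k * ((k : ℝ) * x ^ (k - 1)) * y ^ (n - k)) x := by
    rw [hfun]
    apply HasDerivAt.fun_sum
    intro k hk
    exact ((hasDerivAt_pow k x).const_mul (a k)).mul_const _
  rw [hd.deriv]
  have hL : x * ∑ k ∈ Finset.Icc 1 n, a k * ((k : ℝ) * x ^ (k - 1)) * y ^ (n - k)
      = ∑ k ∈ Finset.Icc 1 n, (k : ℝ) * (a k * x ^ k * y ^ (n - k)) := by
    rw [Finset.mul_sum]
    apply Finset.sum_congr rfl
    intro k hk
    have hk1 : 1 ≤ k := (Finset.mem_Icc.mp hk).1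
    have hx : x * x ^ (k - 1) = x ^ k := by
      rw [← pow_succ']; congr 1; omega
    calc x * (a k * ((k : ℝ) * x ^ (k - 1)) * y ^ (n - k))
        = (k : ℝ) * (a k * (x * x ^ (k - 1)) * y ^ (n - k)) := by ring
      _ = (k : ℝ) * (a k * x ^ k * y ^ (n - k)) := by rw [hx]
  rw [hL]
  have hS : rtilde x y n = ∑ k ∈ Finset.Icc 1 n, a k * x ^ k * y ^ (n - k) := by
    simp [rtilde, h0, ha]
  rw [hS]
  rw [eq_sub_iff_add_eq, ← eq_sub_iff_add_eq']
  have hsub : (n : ℝ) * ∑ k ∈ Finset.Icc 1 n, a k * x ^ k * y ^ (n - k)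
      - ∑ k ∈ Finset.Icc 1 n, (k : ℝ) * (a k * x ^ k * y ^ (n - k))
      = ∑ k ∈ Finset.Icc 1 n, ((n : ℝ) - k) * (a k * x ^ k * y ^ (n - k)) := by
    rw [Finset.mul_sum, ← Finset.sum_sub_distrib]
    apply Finset.sum_congr rfl
    intro k _
    ring
  rw [hsub]
  have hins : Finset.Icc 1 n = insert n (Finset.Icc 1 (n - 1)) := by
    ext m
    simp only [Finset.mem_insert, Finset.mem_Icc]
    omega
  rw [hins, Finset.sum_insert (by simp; omega)]
  rw [sub_self, zero_mul, zero_add]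
  have hrt : rtilde x (((n : ℝ) - 1) ^ 2 / ((n : ℝ) - 2) ^ 2 * y) (n - 1)
      = ∑ k ∈ Finset.Icc 1 (n - 1),
          ((n : ℝ) - 2) ^ (2 * (n - 1 - k)) / (2 ^ (n - 1 - k) * (Nat.factorial (n - 1 - k) : ℝ))
            * x ^ k * (((n : ℝ) - 1) ^ 2 / ((n : ℝ) - 2) ^ 2 * y) ^ (n - 1 - k) := by
    rw [rtilde, if_neg h1]
    apply Finset.sum_congr rfl
    intro k _
    have : ((n - 1 : ℕ) : ℝ) - 1 = (n : ℝ) - 2 := by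
      rw [Nat.cast_sub (by omega)]; push_cast; ring
    rw [this]
  rw [hrt, Finset.mul_sum]
  apply Finset.sum_congr rfl
  intro k hk
  obtain ⟨hk1, hk2⟩ := Finset.mem_Icc.mp hk
  obtain ⟨i, hi⟩ : ∃ i, n - k = i + 1 := ⟨n - k - 1, by omega⟩
  have hi2 : n - 1 - k = i := by omega
  have hnk : (n : ℝ) - (k : ℝ) = (i : ℝ) + 1 := by
    have h : (n : ℕ) = k + (i + 1) := by omega
    rw [h]; push_cast; ring
  rw [ha]
  simp only [hi, hi2, hnk]
  have hn2 : ((n : ℝ) - 2) ≠ 0 := by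
    have : (3 : ℝ) ≤ (n : ℝ) := by exact_mod_cast hn
    nlinarith
  have hfac : (Nat.factorial (i + 1) : ℝ) = ((i : ℝ) + 1) * (Nat.factorial i : ℝ) := by
    rw [Nat.factorial_succ]; push_cast; ring
  have hpow : (((n : ℝ) - 1) ^ 2 / ((n : ℝ) - 2) ^ 2 * y) ^ i
      = ((n : ℝ) - 1) ^ (2 * i) / ((n : ℝ) - 2) ^ (2 * i) * y ^ i := by
    rw [mul_pow, div_pow, ← pow_mul, ← pow_mul]
  rw [hpow, hfac]
  have hfi : (Nat.factorial i : ℝ) ≠ 0 := by exact_mod_cast Nat.factorial_ne_zero i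
  have h2i : 2 * (i + 1) = 2 * i + 2 := by ring
  rw [h2i, pow_add, pow_succ]
  field_simp
  ring
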